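/- Let p be a prime and let (H,h) and (H',h') be rooted graphs (graphs with a distinguished vertex), neither of which has a rooted automorphism of order p. If for every rooted graph (G,g) the number of root-preserving homomorphisms from (G,g) to (H,h) is congruent mod p to the number of root-preserving homomorphisms from (G,g) to (H',h'), then (H,h) and (H',h') are isomorphic as rooted graphs. -/

import Mathlib

structure RGraph (V : Type) where
  Adj : V → V → Prop
  symm : ∀ u v, Adj u v → Adj v u

def RGraph.IsHom {V W : Type} (G : RGraph V) (H : RGraph W) (f : V → W) : Prop :=
  ∀ u v, G.Adj u v → H.Adj (f u) (f v)

noncomputable def homCount {V W : Type} (G : RGraph V) (H : RGraph W) : ℕ :=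
  Nat.card {f : V → W // G.IsHom H f}

def RGraph.IsAut {V : Type} (H : RGraph V) (σ : Equiv.Perm V) : Prop :=
  ∀ u v, H.Adj u v ↔ H.Adj (σ u) (σ v)

def RGraph.fixedSubgraph {V : Type} (H : RGraph V) (σ : Equiv.Perm V) :
    RGraph {v : V // σ v = v} :=
  ⟨fun u v => H.Adj u v, fun u v h => H.symm u v h⟩
/-- Number of root-preserving homomorphisms between rooted graphs. -/
noncomputable def homCountR {V W : Type} (G : RGraph V) (g : V) (H : RGraph W) (h : W) : ℕ :=
  Nat.card {f : V → W // G.IsHom H f ∧ f g = h}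

/-- Number of injective root-preserving homomorphisms between rooted graphs. -/
noncomputable def injCountR {V W : Type} (G : RGraph V) (g : V) (H : RGraph W) (h : W) : ℕ :=
  Nat.card {f : V → W // G.IsHom H f ∧ f g = h ∧ Function.Injective f}

/-- Quotient of a graph by a setoid on its vertices. -/
def quotGraph {U : Type} (G : RGraph U) (s : Setoid U) : RGraph (Quotient s) :=
  ⟨fun x y => ∃ u v, Quotient.mk s u = x ∧ Quotient.mk s v = y ∧ G.Adj u v,
   by rintro x y ⟨u, v, hu, hv, huv⟩; exact ⟨v, u, hv, hu, G.symm _ _ huv⟩⟩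

instance setoidFinite {U : Type} [Finite U] : Finite (Setoid U) :=
  Finite.of_injective (fun s : Setoid U => s.r)
    (fun a b hab => Setoid.ext fun x y => by rw [show a.r = b.r from hab])

/-- Kernel decomposition: rooted hom counts are sums of injective rooted hom counts
over quotients. -/
theorem homCountR_eq_sum {U W : Type} [Fintype U] [Fintype W] (G : RGraph U) (g : U)
    (H : RGraph W) (h : W) [Fintype (Setoid U)] :
    homCountR G g H h
      = ∑ s : Setoid U, injCountR (quotGraph G s) (Quotient.mk s g) H h := by
  classical
  have key : homCountR G g H h
      = Nat.card (Σ s : Setoid U,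
          {f : Quotient s → W // (quotGraph G s).IsHom H f ∧ f (Quotient.mk s g) = h
            ∧ Function.Injective f}) := by
    refine (Nat.card_congr (Equiv.ofBijective
      (fun x : (Σ s : Setoid U,
          {f : Quotient s → W // (quotGraph G s).IsHom H f ∧ f (Quotient.mk s g) = h
            ∧ Function.Injective f}) =>
        (⟨x.2.1 ∘ Quotient.mk x.1,
          fun u v huv => x.2.2.1 _ _ ⟨u, v, rfl, rfl, huv⟩, x.2.2.2.1⟩ :
          {f : U → W // G.IsHom H f ∧ f g = h})) ⟨?_, ?_⟩)).symm
    · rintro ⟨s, f, hf⟩ ⟨s', f', hf'⟩ hEq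
      have hEq' : f ∘ Quotient.mk s = f' ∘ Quotient.mk s' := congrArg Subtype.val hEq
      have hss : s = s' := by
        refine Setoid.ext fun a b => ?_
        constructor
        · intro hab
          have h1 : f (Quotient.mk s a) = f (Quotient.mk s b) :=
            congrArg f (Quotient.sound hab)
          have h2 : f' (Quotient.mk s' a) = f' (Quotient.mk s' b) := by
            have ha := congrFun hEq' a
            have hb := congrFun hEq' b
            simp only [Function.comp_apply] at ha hb
            rw [← ha, ← hb]; exact h1
          exact Quotient.exact (hf'.2.2 h2)
        · intro hab
          have h1 : f' (Quotient.mk s' a) = f' (Quotient.mk s' b) :=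
            congrArg f' (Quotient.sound hab)
          have h2 : f (Quotient.mk s a) = f (Quotient.mk s b) := by
            have ha := congrFun hEq' a
            have hb := congrFun hEq' b
            simp only [Function.comp_apply] at ha hb
            rw [ha, hb]; exact h1
          exact Quotient.exact (hf.2.2 h2)
      subst hss
      have hff : f = f' := by
        funext x
        induction x using Quotient.ind with
        | _ a => exact congrFun hEq' a
      subst hff
      rfl
    · rintro ⟨f, hfhom, hfg⟩
      refine ⟨⟨Setoid.ker f, Quotient.lift f (fun a b hab => hab), ?_, ?_, ?_⟩, ?_⟩
      · rintro x y ⟨u, v, hu, hv, huv⟩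
        subst hu; subst hv
        exact hfhom u v huv
      · exact hfg
      · intro x y
        induction x using Quotient.ind with
        | _ a =>
          induction y using Quotient.ind with
          | _ b => exact fun hab => Quotient.sound hab
      · rfl
  rw [key]
  letI : ∀ s : Setoid U, Fintype {f : Quotient s → W // (quotGraph G s).IsHom H f ∧
      f (Quotient.mk s g) = h ∧ Function.Injective f} := fun s => Fintype.ofFinite _
  rw [Nat.card_eq_fintype_card, Fintype.card_sigma]
  refine Finset.sum_congr rfl fun s _ => ?_
  rw [injCountR, Nat.card_eq_fintype_card]

/-- Invariance of injective rooted hom counts under rooted isomorphisms of the source. -/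
theorem injCountR_congr {U U' W : Type} (e : U ≃ U') (G : RGraph U) (G' : RGraph U')
    (hadj : ∀ a b, G.Adj a b ↔ G'.Adj (e a) (e b)) (g : U) (K : RGraph W) (k : W) :
    injCountR G' (e g) K k = injCountR G g K k := by
  refine Nat.card_congr ⟨fun f => ⟨f.1 ∘ e, ?_, ?_, ?_⟩, fun f => ⟨f.1 ∘ e.symm, ?_, ?_, ?_⟩,
    ?_, ?_⟩
  · exact fun u v huv => f.2.1 _ _ ((hadj u v).1 huv)
  · exact f.2.2.1
  · exact f.2.2.2.comp e.injective
  · intro u v huv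
    refine f.2.1 _ _ ((hadj (e.symm u) (e.symm v)).2 ?_)
    simpa using huv
  · simpa using f.2.2.1
  · exact f.2.2.2.comp e.symm.injective
  · intro f; ext x; simp
  · intro f; ext x; simp

/-- Composition of a bijective graph endo-homomorphism with itself eventually gives the
inverse, so such maps are automorphisms. -/
theorem bij_hom_isAut {V : Type} [Fintype V] (G : RGraph V) (f : V → V)
    (hf : G.IsHom G f) (hbij : Function.Bijective f) :
    G.IsAut (Equiv.ofBijective f hbij) := by
  set σ : Equiv.Perm V := Equiv.ofBijective f hbij with hσ
  have hcoe : ∀ x, σ x = f x := fun x => rfl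
  have hpow : ∀ k : ℕ, G.IsHom G ⇑(σ ^ k) := by
    intro k
    induction k with
    | zero => simp only [pow_zero]; intro u v huv; simpa using huv
    | succ n ih =>
      intro u v huv
      have h1 : G.Adj (σ u) (σ v) := hf u v huv
      have h2 := ih _ _ h1
      simpa [pow_succ, Equiv.Perm.mul_apply] using h2
  have hord : 0 < orderOf σ := orderOf_pos σ
  have hinv : σ⁻¹ = σ ^ (orderOf σ - 1) := by
    have : σ ^ (orderOf σ - 1) * σ = 1 := by
      rw [← pow_succ, Nat.sub_add_cancel hord, pow_orderOf_eq_one]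
    exact (eq_inv_of_mul_eq_one_left this).symm
  have hinvhom : G.IsHom G ⇑(σ⁻¹) := by rw [hinv]; exact hpow _
  intro u v
  constructor
  · exact fun huv => hf u v huv
  · intro huv
    have := hinvhom _ _ huv
    simpa using this

/-- The rooted automorphism group of a rooted graph as a subgroup of permutations. -/
def rAut {V : Type} (H : RGraph V) (h : V) : Subgroup (Equiv.Perm V) where
  carrier := {σ | H.IsAut σ ∧ σ h = h}
  one_mem' := ⟨fun u v => Iff.rfl, rfl⟩
  mul_mem' := fun {a b} ha hb =>
    ⟨fun u v => (hb.1 u v).trans (ha.1 _ _), by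
      simp [Equiv.Perm.mul_apply, hb.2, ha.2]⟩
  inv_mem' := fun {a} ha =>
    ⟨fun u v => by
      have := ha.1 (a⁻¹ u) (a⁻¹ v)
      simpa using this.symm, by
      have : a⁻¹ (a h) = h := by simp
      rwa [ha.2] at this⟩

theorem injCountR_self_eq_card_rAut {V : Type} [Fintype V] (H : RGraph V) (h : V) :
    injCountR H h H h = Nat.card (rAut H h) := by
  refine Nat.card_congr ⟨fun f =>
    ⟨Equiv.ofBijective f.1 ((Finite.injective_iff_bijective).1 f.2.2.2),
      bij_hom_isAut H f.1 f.2.1 _, f.2.2.1⟩,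
    fun σ => ⟨⇑σ.1, fun u v huv => (σ.2.1 u v).1 huv, σ.2.2, σ.1.injective⟩, ?_, ?_⟩
  · intro f; rfl
  · intro σ
    refine Subtype.ext (Equiv.ext fun x => rfl)

theorem not_dvd_card_rAut {V : Type} [Fintype V] (p : ℕ) (hp : p.Prime) (H : RGraph V) (h : V)
    (hH : ¬∃ σ : Equiv.Perm V, H.IsAut σ ∧ σ h = h ∧ orderOf σ = p) :
    ¬ p ∣ Nat.card (rAut H h) := by
  haveI : Fact p.Prime := ⟨hp⟩
  intro hdvd
  letI : Fintype (rAut H h) := Fintype.ofFinite _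
  rw [Nat.card_eq_fintype_card] at hdvd
  obtain ⟨σ, hσ⟩ := exists_prime_orderOf_dvd_card (G := rAut H h) p hdvd
  exact hH ⟨σ.1, σ.2.1, σ.2.2, by rw [Subgroup.orderOf_coe, hσ]⟩

/-- The key induction: mod-p equality of rooted hom vectors propagates to injective counts. -/
theorem injCountR_modEq {V W : Type} [Fintype V] [Fintype W] (p : ℕ)
    (H : RGraph V) (h : V) (H' : RGraph W) (h' : W)
    (hhom : ∀ (U : Type) [Fintype U] (G : RGraph U) (g : U),
      homCountR G g H h ≡ homCountR G g H' h' [MOD p]) :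
    ∀ (n : ℕ) (U : Type) [Fintype U], Fintype.card U = n → ∀ (G : RGraph U) (g : U),
      ((injCountR G g H h : ZMod p)) = ((injCountR G g H' h' : ZMod p)) := by
  intro n
  induction n using Nat.strong_induction_on with
  | _ n IH =>
    intro U _ hcard G g
    classical
    letI : Fintype (Setoid U) := Fintype.ofFinite _
    -- the diagonal setoid
    set s₀ : Setoid U := Setoid.ker id with hs₀def
    have hs₀rel : ∀ a b : U, s₀.r a b ↔ a = b := fun a b => Iff.rfl
    -- every other setoid gives a strictly smaller quotient
    have hsmall : ∀ s : Setoid U, s ≠ s₀ → Fintype.card (Quotient s) < n := by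
      intro s hs
      rw [← hcard]
      refine Fintype.card_lt_of_surjective_not_injective (Quotient.mk s)
        (Quotient.mk_surjective) ?_
      intro hinj
      refine hs (Setoid.ext fun a b => ?_)
      constructor
      · exact fun hab => hinj (Quotient.sound hab)
      · rintro rfl; exact s.refl a
    -- the diagonal quotient is isomorphic to G
    have hmkbij : Function.Bijective (Quotient.mk s₀) := by
      constructor
      · intro a b hab
        exact Quotient.exact hab
      · exact Quotient.mk_surjective
    set e : U ≃ Quotient s₀ := Equiv.ofBijective _ hmkbij with he
    have hediag : ∀ a b, G.Adj a b ↔ (quotGraph G s₀).Adj (e a) (e b) := by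
      intro a b
      constructor
      · intro hab; exact ⟨a, b, rfl, rfl, hab⟩
      · rintro ⟨u, v, hu, hv, huv⟩
        have hu' : u = a := Quotient.exact hu
        have hv' : v = b := Quotient.exact hv
        subst hu'; subst hv'; exact huv
    have hdiag1 : injCountR (quotGraph G s₀) (Quotient.mk s₀ g) H h = injCountR G g H h :=
      injCountR_congr e G (quotGraph G s₀) hediag g H h
    have hdiag2 : injCountR (quotGraph G s₀) (Quotient.mk s₀ g) H' h' = injCountR G g H' h' :=
      injCountR_congr e G (quotGraph G s₀) hediag g H' h'
    -- cast the decomposition to ZMod p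
    have hsum1 : ((homCountR G g H h : ZMod p))
        = ∑ s : Setoid U, ((injCountR (quotGraph G s) (Quotient.mk s g) H h : ZMod p)) := by
      rw [homCountR_eq_sum G g H h]; push_cast; rfl
    have hsum2 : ((homCountR G g H' h' : ZMod p))
        = ∑ s : Setoid U, ((injCountR (quotGraph G s) (Quotient.mk s g) H' h' : ZMod p)) := by
      rw [homCountR_eq_sum G g H' h']; push_cast; rfl
    have hhomeq : ((homCountR G g H h : ZMod p)) = ((homCountR G g H' h' : ZMod p)) :=
      (ZMod.natCast_eq_natCast_iff _ _ _).2 (hhom U G g)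
    -- all non-diagonal terms agree by IH
    have hterm : ∀ s ∈ Finset.univ.erase s₀,
        ((injCountR (quotGraph G s) (Quotient.mk s g) H h : ZMod p))
          = ((injCountR (quotGraph G s) (Quotient.mk s g) H' h' : ZMod p)) := by
      intro s hs
      have hs' : s ≠ s₀ := Finset.ne_of_mem_erase hs
      exact IH (Fintype.card (Quotient s)) (hsmall s hs') (Quotient s) rfl
        (quotGraph G s) (Quotient.mk s g)
    have hsplit1 : ∑ s : Setoid U, ((injCountR (quotGraph G s) (Quotient.mk s g) H h : ZMod p))
        = ((injCountR (quotGraph G s₀) (Quotient.mk s₀ g) H h : ZMod p))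
          + ∑ s ∈ Finset.univ.erase s₀,
              ((injCountR (quotGraph G s) (Quotient.mk s g) H h : ZMod p)) :=
      (Finset.add_sum_erase _ _ (Finset.mem_univ s₀)).symm
    have hsplit2 : ∑ s : Setoid U, ((injCountR (quotGraph G s) (Quotient.mk s g) H' h' : ZMod p))
        = ((injCountR (quotGraph G s₀) (Quotient.mk s₀ g) H' h' : ZMod p))
          + ∑ s ∈ Finset.univ.erase s₀,
              ((injCountR (quotGraph G s) (Quotient.mk s g) H' h' : ZMod p)) :=
      (Finset.add_sum_erase _ _ (Finset.mem_univ s₀)).symm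
    have hErase : ∑ s ∈ Finset.univ.erase s₀,
          ((injCountR (quotGraph G s) (Quotient.mk s g) H h : ZMod p))
        = ∑ s ∈ Finset.univ.erase s₀,
            ((injCountR (quotGraph G s) (Quotient.mk s g) H' h' : ZMod p)) :=
      Finset.sum_congr rfl hterm
    have : ((injCountR (quotGraph G s₀) (Quotient.mk s₀ g) H h : ZMod p))
        = ((injCountR (quotGraph G s₀) (Quotient.mk s₀ g) H' h' : ZMod p)) := by
      have := hhomeq
      rw [hsum1, hsum2, hsplit1, hsplit2, hErase] at this
      exact add_right_cancel this
    rw [hdiag1, hdiag2] at this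
    exact this

/-- Rooted graphs with no rooted automorphism of order p and the same rooted
mod-p Lovász vector are isomorphic as rooted graphs. -/
theorem stmt7 (p : ℕ) (hp : p.Prime) {V W : Type} [Fintype V] [Fintype W]
    (H : RGraph V) (h : V) (H' : RGraph W) (h' : W)
    (hH : ¬∃ σ : Equiv.Perm V, H.IsAut σ ∧ σ h = h ∧ orderOf σ = p)
    (hH' : ¬∃ σ : Equiv.Perm W, H'.IsAut σ ∧ σ h' = h' ∧ orderOf σ = p)
    (hhom : ∀ (U : Type) [Fintype U] (G : RGraph U) (g : U),
      homCountR G g H h ≡ homCountR G g H' h' [MOD p]) :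
    ∃ e : V ≃ W, (∀ u v, H.Adj u v ↔ H'.Adj (e u) (e v)) ∧ e h = h' := by
  classical
  haveI : NeZero p := ⟨hp.ne_zero⟩
  have key := injCountR_modEq p H h H' h' hhom
  have key' := injCountR_modEq p H' h' H h (fun U _ G g => (hhom U G g).symm)
  -- injCountR H h H' h' is nonzero
  have h1 : ((injCountR H h H' h' : ZMod p)) = ((injCountR H h H h : ZMod p)) :=
    (key (Fintype.card V) V rfl H h).symm
  have h2 : ((injCountR H' h' H h : ZMod p)) = ((injCountR H' h' H' h' : ZMod p)) :=
    (key' (Fintype.card W) W rfl H' h').symm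
  have hne1 : ((injCountR H h H h : ZMod p)) ≠ 0 := by
    rw [injCountR_self_eq_card_rAut, Ne, ZMod.natCast_eq_zero_iff]
    exact not_dvd_card_rAut p hp H h hH
  have hne2 : ((injCountR H' h' H' h' : ZMod p)) ≠ 0 := by
    rw [injCountR_self_eq_card_rAut, Ne, ZMod.natCast_eq_zero_iff]
    exact not_dvd_card_rAut p hp H' h' hH'
  have hpos1 : injCountR H h H' h' ≠ 0 := by
    intro h0
    rw [h0] at h1; exact hne1 (by exact_mod_cast h1.symm)
  have hpos2 : injCountR H' h' H h ≠ 0 := by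
    intro h0
    rw [h0] at h2; exact hne2 (by exact_mod_cast h2.symm)
  -- extract injective rooted homs
  obtain ⟨f, hf⟩ := (Nat.card_ne_zero.1 hpos1).1
  obtain ⟨f', hf'⟩ := (Nat.card_ne_zero.1 hpos2).1
  have hcard : Fintype.card V = Fintype.card W :=
    le_antisymm (Fintype.card_le_of_injective f hf.2.2)
      (Fintype.card_le_of_injective f' hf'.2.2)
  have hbij : Function.Bijective f :=
    (Fintype.bijective_iff_injective_and_card f).2 ⟨hf.2.2, hcard⟩
  -- the composite is a bijective endo-hom, hence an automorphism
  have hπhom : H.IsHom H (f' ∘ f) := by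
    intro u v huv
    exact hf'.1 _ _ (hf.1 u v huv)
  have hπbij : Function.Bijective (f' ∘ f) :=
    (Finite.injective_iff_bijective).1 (hf'.2.2.comp hf.2.2)
  have hπaut := bij_hom_isAut H (f' ∘ f) hπhom hπbij
  refine ⟨Equiv.ofBijective f hbij, ?_, hf.2.1⟩
  intro u v
  constructor
  · exact fun huv => hf.1 u v huv
  · intro huv
    have h3 : H.Adj (f' (f u)) (f' (f v)) := hf'.1 _ _ huv
    exact (hπaut u v).2 h3
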